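/- For f(x) = -x²/2 + log cosh(x) (the Curie-Weiss case J = 1, h = 0), the point 0 is the unique global maximum point, and the Taylor expansion of f at 0 satisfies f(x) = -x⁴/12 + o(x⁴); i.e. f has type k = 2 and strength λ = -2 at 0. -/

import Mathlib

open Real Filter Asymptotics

lemma cosh_lt_exp_half_sq {x : ℝ} (hx : x ≠ 0) : Real.cosh x < Real.exp (x ^ 2 / 2) := by
  rw [Real.cosh_eq_tsum, Real.exp_eq_exp_ℝ, NormedSpace.exp_eq_tsum ℝ]
  refine Summable.tsum_lt_tsum (i := 2) (fun i => ?_) ?_ x.hasSum_cosh.summable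
    (NormedSpace.expSeries_summable' (x ^ 2 / 2))
  · simp only [div_pow, pow_mul, smul_eq_mul, inv_mul_eq_div, div_div]
    gcongr <;>
      first
        | positivity
        | exact_mod_cast Nat.two_pow_mul_factorial_le_factorial_two_mul _
  · simp only [div_pow, pow_mul, smul_eq_mul, inv_mul_eq_div, div_div]
    have h2 : (0:ℝ) < x ^ 2 := by positivity
    rw [div_lt_div_iff₀ (by positivity) (by positivity)]
    norm_num [Nat.factorial]
    nlinarith [pow_pos h2 2]

lemma hasDerivAt_tanh (x : ℝ) : HasDerivAt Real.tanh (1 - Real.tanh x ^ 2) x := by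
  have h := ((Real.hasDerivAt_sinh x).div (Real.hasDerivAt_cosh x) (Real.cosh_pos x).ne')
  have he : ∀ y, Real.tanh y = Real.sinh y / Real.cosh y := fun y => Real.tanh_eq_sinh_div_cosh y
  rw [show (Real.tanh : ℝ → ℝ) = fun y => Real.sinh y / Real.cosh y from funext he]
  refine h.congr_deriv (Eq.symm ?_)
  show 1 - (Real.sinh x / Real.cosh x) ^ 2 = _
  have hc := (Real.cosh_pos x).ne'
  field_simp

lemma tendsto_tanh_div : Tendsto (fun x : ℝ => Real.tanh x / x) (nhdsWithin 0 {(0:ℝ)}ᶜ) (nhds 1) := by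
  have h := hasDerivAt_tanh 0
  rw [hasDerivAt_iff_tendsto_slope] at h
  have : (1 : ℝ) = 1 - Real.tanh 0 ^ 2 := by simp
  rw [this]
  refine h.congr' ?_
  filter_upwards [self_mem_nhdsWithin] with x hx
  simp [slope_def_field, Real.tanh_zero, div_eq_div_iff]

lemma key_tendsto :
    Tendsto (fun x : ℝ => (Real.log (Real.cosh x) - x ^ 2 / 2 + x ^ 4 / 12) / x ^ 4)
      (nhdsWithin 0 {(0:ℝ)}ᶜ) (nhds 0) := by
  -- derivatives
  have hN : ∀ x : ℝ, HasDerivAt (fun y : ℝ => Real.log (Real.cosh y) - y ^ 2 / 2 + y ^ 4 / 12)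
      (Real.tanh x - x + x ^ 3 / 3) x := by
    intro x
    have hB : HasDerivAt (fun y : ℝ => Real.log (Real.cosh y)) (Real.sinh x / Real.cosh x) x :=
      (Real.hasDerivAt_cosh x).log (Real.cosh_pos x).ne'
    have hA : HasDerivAt (fun y : ℝ => y ^ 2 / 2) x x := by
      have := (hasDerivAt_pow 2 x).div_const 2
      refine this.congr_deriv ?_; push_cast; ring
    have hC : HasDerivAt (fun y : ℝ => y ^ 4 / 12) (x ^ 3 / 3) x := by
      have := (hasDerivAt_pow 4 x).div_const 12
      refine this.congr_deriv ?_; push_cast; ring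
    have := (hB.sub hA).add hC
    refine this.congr_deriv (Eq.symm ?_)
    rw [Real.tanh_eq_sinh_div_cosh]
  have hN2 : ∀ x : ℝ, HasDerivAt (fun y : ℝ => Real.tanh y - y + y ^ 3 / 3)
      ((1 - Real.tanh x ^ 2) - 1 + x ^ 2) x := by
    intro x
    have hC : HasDerivAt (fun y : ℝ => y ^ 3 / 3) (x ^ 2) x := by
      have := (hasDerivAt_pow 3 x).div_const 3
      refine this.congr_deriv ?_; push_cast; ring
    exact ((hasDerivAt_tanh x).sub (hasDerivAt_id x)).add hC
  have hg4 : ∀ x : ℝ, HasDerivAt (fun y : ℝ => y ^ 4) (4 * x ^ 3) x := by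
    intro x
    have := hasDerivAt_pow 4 x
    refine this.congr_deriv ?_; norm_num
  have hg3 : ∀ x : ℝ, HasDerivAt (fun y : ℝ => 4 * y ^ 3) (12 * x ^ 2) x := by
    intro x
    have := (hasDerivAt_pow 3 x).const_mul 4
    refine this.congr_deriv ?_; push_cast; ring
  -- innermost limit
  have T1 : Tendsto (fun x : ℝ => ((1 - Real.tanh x ^ 2) - 1 + x ^ 2) / (12 * x ^ 2))
      (nhdsWithin 0 {(0:ℝ)}ᶜ) (nhds 0) := by
    have h0 : Tendsto (fun x : ℝ => (1 - (Real.tanh x / x) ^ 2) / 12)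
        (nhdsWithin 0 {(0:ℝ)}ᶜ) (nhds ((1 - 1 ^ 2) / 12)) :=
      (tendsto_const_nhds.sub (tendsto_tanh_div.pow 2)).div_const 12
    norm_num at h0
    refine h0.congr' ?_
    filter_upwards [self_mem_nhdsWithin] with x hx
    have hx' : x ≠ 0 := hx
    have hc := Real.cosh_pos x
    field_simp
    ring
  -- continuity facts
  have hct : Continuous fun x : ℝ => Real.tanh x - x + x ^ 3 / 3 := by
    have : Continuous Real.tanh := by
      rw [show (Real.tanh : ℝ → ℝ) = fun y => Real.sinh y / Real.cosh y from
        funext fun y => Real.tanh_eq_sinh_div_cosh y]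
      exact Real.continuous_sinh.div Real.continuous_cosh fun x => (Real.cosh_pos x).ne'
    continuity
  have hcN : Continuous fun x : ℝ => Real.log (Real.cosh x) - x ^ 2 / 2 + x ^ 4 / 12 := by
    have : Continuous fun x : ℝ => Real.log (Real.cosh x) :=
      Real.continuous_cosh.log fun x => (Real.cosh_pos x).ne'
    continuity
  have hne : ∀ᶠ x in nhdsWithin (0:ℝ) {(0:ℝ)}ᶜ, x ≠ 0 := self_mem_nhdsWithin
  -- second L'Hopital
  have T2 : Tendsto (fun x : ℝ => (Real.tanh x - x + x ^ 3 / 3) / (4 * x ^ 3))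
      (nhdsWithin 0 {(0:ℝ)}ᶜ) (nhds 0) := by
    refine HasDerivAt.lhopital_zero_nhdsNE (f' := fun x => (1 - Real.tanh x ^ 2) - 1 + x ^ 2)
      (g' := fun x => 12 * x ^ 2) (Eventually.of_forall hN2) (Eventually.of_forall hg3) ?_ ?_ ?_ T1
    · filter_upwards [hne] with x hx; positivity
    · have : Tendsto (fun x : ℝ => Real.tanh x - x + x ^ 3 / 3) (nhds 0) (nhds 0) := by
        have := hct.tendsto 0
        simpa using this
      exact this.mono_left nhdsWithin_le_nhds
    · have : Tendsto (fun x : ℝ => 4 * x ^ 3) (nhds (0:ℝ)) (nhds 0) := by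
        have : Continuous fun x : ℝ => 4 * x ^ 3 := by continuity
        simpa using this.tendsto 0
      exact this.mono_left nhdsWithin_le_nhds
  -- first L'Hopital
  have T3 : Tendsto (fun x : ℝ => (Real.log (Real.cosh x) - x ^ 2 / 2 + x ^ 4 / 12) / x ^ 4)
      (nhdsWithin 0 {(0:ℝ)}ᶜ) (nhds 0) := by
    refine HasDerivAt.lhopital_zero_nhdsNE (f' := fun x => Real.tanh x - x + x ^ 3 / 3)
      (g' := fun x => 4 * x ^ 3) (Eventually.of_forall hN) (Eventually.of_forall hg4) ?_ ?_ ?_ T2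
    · filter_upwards [hne] with x hx; positivity
    · have : Tendsto (fun x : ℝ => Real.log (Real.cosh x) - x ^ 2 / 2 + x ^ 4 / 12)
          (nhds 0) (nhds 0) := by simpa using hcN.tendsto 0
      exact this.mono_left nhdsWithin_le_nhds
    · have : Tendsto (fun x : ℝ => x ^ 4) (nhds (0:ℝ)) (nhds 0) := by
        simpa using (continuous_pow 4).tendsto (0:ℝ)
      exact this.mono_left nhdsWithin_le_nhds
  exact T3

theorem stmt_8 (f : ℝ → ℝ) (hf : ∀ x, f x = -x ^ 2 / 2 + Real.log (Real.cosh x)) :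
    (∀ x, f x ≤ f 0) ∧ (∀ μ : ℝ, (∀ x, f x ≤ f μ) → μ = 0) ∧
    (fun x : ℝ => f x - (f 0 + (-2) * x ^ 4 / (Nat.factorial 4))) =o[nhds 0]
      fun x : ℝ => x ^ 4 := by
  have hf0 : f 0 = 0 := by simp [hf 0]
  have hle : ∀ x, f x ≤ f 0 := by
    intro x
    rw [hf x, hf0]
    have h1 : Real.log (Real.cosh x) ≤ x ^ 2 / 2 := by
      have := Real.log_le_log (Real.cosh_pos x) (Real.cosh_le_exp_half_sq x)
      rwa [Real.log_exp] at this
    linarith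
  have hlt : ∀ x : ℝ, x ≠ 0 → f x < 0 := by
    intro x hx
    rw [hf x]
    have h1 : Real.log (Real.cosh x) < x ^ 2 / 2 := by
      have := Real.log_lt_log (Real.cosh_pos x) (cosh_lt_exp_half_sq hx)
      rwa [Real.log_exp] at this
    linarith
  refine ⟨hle, fun μ hμ => ?_, ?_⟩
  · by_contra hμ0
    have h1 := hμ 0
    rw [hf0] at h1
    exact absurd (lt_of_le_of_lt h1 (hlt μ hμ0)) (lt_irrefl 0)
  · have heq : (fun x : ℝ => f x - (f 0 + (-2) * x ^ 4 / (Nat.factorial 4))) =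
        fun x : ℝ => Real.log (Real.cosh x) - x ^ 2 / 2 + x ^ 4 / 12 := by
      funext x
      rw [hf x, hf0]
      norm_num [Nat.factorial]
      ring
    rw [heq, isLittleO_iff_tendsto]
    · have hp : Tendsto (fun x : ℝ => (Real.log (Real.cosh x) - x ^ 2 / 2 + x ^ 4 / 12) / x ^ 4)
          (pure 0) (nhds 0) := by
        have h := tendsto_pure_nhds
          (fun x : ℝ => (Real.log (Real.cosh x) - x ^ 2 / 2 + x ^ 4 / 12) / x ^ 4) 0
        norm_num at h
        exact h
      have h := key_tendsto.sup hp
      rwa [nhdsNE_sup_pure] at h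
    · intro x hx
      have : x = 0 := by
        have := pow_eq_zero_iff (n := 4) (by norm_num) |>.mp hx
        exact this
      simp [this]
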